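/- arXiv:2108.05393 — 2 statements merged into one kernel-verified Lean document; each statement's English description precedes it below -/
import Mathlib

section
/- Let $q \in \mathbb{C}^\times$ with $|q| < 1$, $t \in \mathbb{C}^\times$, $n \geq 1$, $1 \leq r \leq n$. Define the Macdonald operator $M_r(\mathbf{z}|q,t) f(\mathbf{z}) = \sum_{|I|=r} \prod_{i \in I, j \notin I} \frac{t z_i - t^{-1} z_j}{z_i - z_j} \, f(\mathbf{z}^{(I)})$, where $\mathbf{z}^{(I)}$ multiplies $z_i$ by $q^2$ for $i \in I$, and let $\phi(\mathbf{z}) = \prod_{j \neq k} \frac{(q z_j/z_k; q^2)_\infty}{(q^2 t^{-2} z_j/z_k; q^2)_\infty}$. Then for any function $f$ on $(\mathbb{C}^\times)^n$ and any point $\mathbf{z}$ where all the relevant quantities are defined and nonzero, $M_r(\mathbf{z}|q,t)\big(\phi \cdot f\big)(\mathbf{z}) = \phi(\mathbf{z}) \cdot \big(M_r(\mathbf{z}|q, q t^{-1}) f\big)(\mathbf{z})$. -/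
open Finset

noncomputable section

/-- The infinite `q`-Pochhammer symbol `(z; q²)_∞ = ∏_{m≥0} (1 - z q^{2m})`. -/
def qPoch (q z : ℂ) : ℂ := ∏' m : ℕ, (1 - z * q ^ (2 * m))

/-- The point `z^{(I)}` obtained from `z` by multiplying `z_i` by `q²` for `i ∈ I`. -/
def shifted (q : ℂ) {n : ℕ} (I : Finset (Fin n)) (z : Fin n → ℂ) : Fin n → ℂ :=
  fun k => if k ∈ I then q ^ 2 * z k else z k

/-- The Macdonald operator `M_r(z|q,t)` acting on a function `f`. -/
def macdonaldOp (q t' : ℂ) (n r : ℕ) (f : (Fin n → ℂ) → ℂ) (z : Fin n → ℂ) : ℂ :=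
  ∑ I ∈ (univ : Finset (Fin n)).powersetCard r,
    (∏ i ∈ I, ∏ j ∈ univ \ I, (t' * z i - t'⁻¹ * z j) / (z i - z j)) *
      f (shifted q I z)

/-- The gauge function `φ(z) = ∏_{j ≠ k} (q z_j/z_k; q²)_∞ / (q² t⁻² z_j/z_k; q²)_∞`. -/
def gaugePhi (q t : ℂ) (n : ℕ) (z : Fin n → ℂ) : ℂ :=
  ∏ j : Fin n, ∏ k ∈ univ.erase j,
    qPoch q (q * z j / z k) / qPoch q (q ^ 2 * (t ^ 2)⁻¹ * z j / z k)

/-! ### Auxiliary lemmas -/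

lemma qPoch_multipliable (q w : ℂ) (hq : ‖q‖ < 1) :
    Multipliable (fun m : ℕ => 1 - w * q ^ (2 * m)) := by
  by_cases hzero : ∃ m, 1 - w * q ^ (2 * m) = 0
  · obtain ⟨m0, h0⟩ := hzero
    refine ⟨0, ?_⟩
    have h : ∀ᶠ s : Finset ℕ in Filter.atTop, (∏ i ∈ s, (1 - w * q ^ (2 * i))) = 0 := by
      filter_upwards [Filter.eventually_ge_atTop ({m0} : Finset ℕ)] with s hs
      exact Finset.prod_eq_zero (hs (Finset.mem_singleton_self m0)) h0
    exact Filter.Tendsto.congr' (by filter_upwards [h] with s hs using hs.symm)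
      tendsto_const_nhds
  · push_neg at hzero
    refine Complex.multipliable_of_summable_log ?_
    have habs : Filter.Tendsto (fun m : ℕ => ‖w‖ * (‖q‖ ^ 2) ^ m)
        Filter.atTop (nhds 0) := by
      simpa using (tendsto_pow_atTop_nhds_zero_of_lt_one
        (by positivity) (by nlinarith [norm_nonneg q, sq_nonneg (‖q‖)])).const_mul
        (‖w‖)
    have hM : ∃ M : ℕ, ∀ m ≥ M, ‖w‖ * (‖q‖ ^ 2) ^ m ≤ 1/2 := by
      have := habs.eventually (eventually_le_nhds (by norm_num : (0:ℝ) < 1/2))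
      simpa using this.exists_forall_of_atTop
    obtain ⟨M, hM⟩ := hM
    rw [← summable_nat_add_iff M]
    have hb : ∀ m : ℕ, ‖Complex.log (1 - w * q ^ (2 * (m + M)))‖ ≤
        (3/2 * (‖w‖ * (‖q‖ ^ 2) ^ M)) * (‖q‖ ^ 2) ^ m := by
      intro m
      have harg : ‖-(w * q ^ (2 * (m + M)))‖ = ‖w‖ * (‖q‖ ^ 2) ^ (m + M) := by
        rw [norm_neg, norm_mul, norm_pow, ← pow_mul]
      have hle : ‖-(w * q ^ (2 * (m + M)))‖ ≤ 1/2 := by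
        rw [harg]; exact hM (m + M) (Nat.le_add_left M m)
      have := Complex.norm_log_one_add_half_le_self hle
      rw [harg] at this
      calc ‖Complex.log (1 - w * q ^ (2 * (m + M)))‖
          = ‖Complex.log (1 + -(w * q ^ (2 * (m + M))))‖ := by ring_nf
        _ ≤ 3/2 * (‖w‖ * (‖q‖ ^ 2) ^ (m + M)) := this
        _ = (3/2 * (‖w‖ * (‖q‖ ^ 2) ^ M)) * (‖q‖ ^ 2) ^ m := by
            rw [pow_add]; ring
    exact Summable.of_norm_bounded
      ((summable_geometric_of_lt_one (by positivity)
        (by nlinarith [norm_nonneg q])).mul_left _) hb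

lemma qPoch_shift (q w : ℂ) (hq : ‖q‖ < 1) :
    qPoch q w = (1 - w) * qPoch q (q ^ 2 * w) := by
  have hm : Multipliable (fun m : ℕ => 1 - w * q ^ (2 * (m + 1))) := by
    have := qPoch_multipliable q (q ^ 2 * w) hq
    refine this.congr fun m => ?_
    ring
  have key := tprod_eq_zero_mul' (f := fun m : ℕ => 1 - w * q ^ (2 * m)) hm
  rw [qPoch, key]
  congr 1
  · simp
  · rw [qPoch]
    exact tprod_congr fun m => by ring

lemma qPoch_factor_ne_zero {q w : ℂ} (hq : ‖q‖ < 1) (h : qPoch q w ≠ 0) :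
    1 - w ≠ 0 := by
  rw [qPoch_shift q w hq] at h
  exact left_ne_zero_of_mul h

/-- The correction factor appearing in the gauge transformation. -/
def corr (q t : ℂ) {n : ℕ} (z : Fin n → ℂ) (I : Finset (Fin n)) (j k : Fin n) : ℂ :=
  if j ∈ I then
    (if k ∈ I then 1 else (1 - q ^ 2 * (t ^ 2)⁻¹ * z j / z k) / (1 - q * z j / z k))
  else
    (if k ∈ I then (1 - q * z j / (q ^ 2 * z k)) / (1 - q ^ 2 * (t ^ 2)⁻¹ * z j / (q ^ 2 * z k))
     else 1)

lemma corr_diag (q t : ℂ) {n : ℕ} (z : Fin n → ℂ) (I : Finset (Fin n)) (j : Fin n) :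
    corr q t z I j j = 1 := by
  by_cases h : j ∈ I <;> simp [corr, h]

lemma hdiv2 (X Y a b : ℂ) : (a * X) / (b * Y) = X / Y * (a / b) := by
  rw [div_mul_div_comm]; ring_nf

lemma hdiv3 (X Y a b : ℂ) (ha : a ≠ 0) (hb : b ≠ 0) :
    X / Y = (a * X) / (b * Y) * (b / a) := by
  rw [hdiv2, mul_assoc, div_mul_div_comm, mul_comm a b, div_self (mul_ne_zero hb ha), mul_one]

lemma pointwise_identity (q t a b : ℂ) (hq0 : q ≠ 0) (ht : t ≠ 0) (ha0 : a ≠ 0) (hb0 : b ≠ 0)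
    (hab : a - b ≠ 0) (h1 : b - q * a ≠ 0) (h2 : t ^ 2 * a - b ≠ 0) :
    (t * a - t⁻¹ * b) / (a - b) *
      ((1 - q ^ 2 * (t ^ 2)⁻¹ * a / b) / (1 - q * a / b) *
        ((1 - q * b / (q ^ 2 * a)) / (1 - q ^ 2 * (t ^ 2)⁻¹ * b / (q ^ 2 * a)))) =
    (q * t⁻¹ * a - (q * t⁻¹)⁻¹ * b) / (a - b) := by
  have e1 : (1 : ℂ) - q ^ 2 * (t ^ 2)⁻¹ * a / b = (t ^ 2 * b - q ^ 2 * a) / (t ^ 2 * b) := by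
    field_simp
  have e2 : (1 : ℂ) - q * a / b = (b - q * a) / b := by field_simp
  have e3 : (1 : ℂ) - q * b / (q ^ 2 * a) = (q * a - b) / (q * a) := by
    field_simp
  have e4 : (1 : ℂ) - q ^ 2 * (t ^ 2)⁻¹ * b / (q ^ 2 * a) = (t ^ 2 * a - b) / (t ^ 2 * a) := by
    field_simp
  have e5 : t * a - t⁻¹ * b = (t ^ 2 * a - b) / t := by field_simp
  have e6 : q * t⁻¹ * a - (q * t⁻¹)⁻¹ * b = (q ^ 2 * a - t ^ 2 * b) / (q * t) := by
    field_simp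
  rw [e1, e2, e3, e4, e5, e6]
  simp only [div_div_eq_mul_div, div_mul_div_comm, div_div, mul_div_assoc',
    div_mul_eq_mul_div]
  rw [div_eq_div_iff
    (mul_ne_zero (mul_ne_zero ht hab) (mul_ne_zero
      (mul_ne_zero (mul_ne_zero (pow_ne_zero 2 ht) hb0) h1)
      (mul_ne_zero (mul_ne_zero hq0 ha0) h2)))
    (mul_ne_zero (mul_ne_zero hq0 ht) hab)]
  ring

lemma gauge_ratio (q t : ℂ) (hq : ‖q‖ < 1) (hq0 : q ≠ 0) (ht : t ≠ 0)
    (n : ℕ) (z : Fin n → ℂ) (hz : ∀ i, z i ≠ 0) (I : Finset (Fin n))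
    (hpoch : ∀ (J : Finset (Fin n)) (j k : Fin n), j ≠ k →
      qPoch q (q * shifted q J z j / shifted q J z k) ≠ 0 ∧
      qPoch q (q ^ 2 * (t ^ 2)⁻¹ * shifted q J z j / shifted q J z k) ≠ 0) :
    gaugePhi q t n (shifted q I z) =
      gaugePhi q t n z * ∏ i ∈ I, ∏ j ∈ univ \ I, (corr q t z I i j * corr q t z I j i) := by
  have h1 : ∀ j k : Fin n, j ≠ k → (1 : ℂ) - q * z j / z k ≠ 0 := by
    intro j k hjk
    have hp := (hpoch ∅ j k hjk).1
    simp only [shifted, Finset.notMem_empty, if_false] at hp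
    exact qPoch_factor_ne_zero hq hp
  have h3 : ∀ j k : Fin n, j ≠ k → (1 : ℂ) - q ^ 2 * (t ^ 2)⁻¹ * z j / z k ≠ 0 := by
    intro j k hjk
    have hp := (hpoch ∅ j k hjk).2
    simp only [shifted, Finset.notMem_empty, if_false] at hp
    exact qPoch_factor_ne_zero hq hp
  have step1 : ∀ j k : Fin n, j ≠ k →
      qPoch q (q * shifted q I z j / shifted q I z k) /
        qPoch q (q ^ 2 * (t ^ 2)⁻¹ * shifted q I z j / shifted q I z k) =
      (qPoch q (q * z j / z k) / qPoch q (q ^ 2 * (t ^ 2)⁻¹ * z j / z k)) * corr q t z I j k := by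
    intro j k hjk
    by_cases hj : j ∈ I <;> by_cases hk : k ∈ I <;>
      simp only [shifted, corr, hj, hk, if_true, if_false, mul_one]
    · -- both in I
      rw [show q * (q ^ 2 * z j) / (q ^ 2 * z k) = q ^ 2 * (q * z j) / (q ^ 2 * z k) by ring,
        mul_div_mul_left _ _ (pow_ne_zero 2 hq0),
        show q ^ 2 * (t ^ 2)⁻¹ * (q ^ 2 * z j) / (q ^ 2 * z k)
          = q ^ 2 * (q ^ 2 * (t ^ 2)⁻¹ * z j) / (q ^ 2 * z k) by ring,
        mul_div_mul_left _ _ (pow_ne_zero 2 hq0)]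
    · -- j ∈ I, k ∉ I
      have n1 : qPoch q (q * z j / z k)
          = (1 - q * z j / z k) * qPoch q (q * (q ^ 2 * z j) / z k) := by
        have h := qPoch_shift q (q * z j / z k) hq
        rwa [show q ^ 2 * (q * z j / z k) = q * (q ^ 2 * z j) / z k by ring] at h
      have d1 : qPoch q (q ^ 2 * (t ^ 2)⁻¹ * z j / z k)
          = (1 - q ^ 2 * (t ^ 2)⁻¹ * z j / z k)
            * qPoch q (q ^ 2 * (t ^ 2)⁻¹ * (q ^ 2 * z j) / z k) := by
        have h := qPoch_shift q (q ^ 2 * (t ^ 2)⁻¹ * z j / z k) hq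
        rwa [show q ^ 2 * (q ^ 2 * (t ^ 2)⁻¹ * z j / z k)
          = q ^ 2 * (t ^ 2)⁻¹ * (q ^ 2 * z j) / z k by ring] at h
      rw [n1, d1]
      exact hdiv3 _ _ _ _ (h1 j k hjk) (h3 j k hjk)
    · -- j ∉ I, k ∈ I
      have n2 : qPoch q (q * z j / (q ^ 2 * z k))
          = (1 - q * z j / (q ^ 2 * z k)) * qPoch q (q * z j / z k) := by
        have h := qPoch_shift q (q * z j / (q ^ 2 * z k)) hq
        rwa [show q ^ 2 * (q * z j / (q ^ 2 * z k)) = q ^ 2 * (q * z j) / (q ^ 2 * z k) by ring,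
          mul_div_mul_left _ _ (pow_ne_zero 2 hq0)] at h
      have d2 : qPoch q (q ^ 2 * (t ^ 2)⁻¹ * z j / (q ^ 2 * z k))
          = (1 - q ^ 2 * (t ^ 2)⁻¹ * z j / (q ^ 2 * z k))
            * qPoch q (q ^ 2 * (t ^ 2)⁻¹ * z j / z k) := by
        have h := qPoch_shift q (q ^ 2 * (t ^ 2)⁻¹ * z j / (q ^ 2 * z k)) hq
        rwa [show q ^ 2 * (q ^ 2 * (t ^ 2)⁻¹ * z j / (q ^ 2 * z k))
            = q ^ 2 * (q ^ 2 * (t ^ 2)⁻¹ * z j) / (q ^ 2 * z k) by ring,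
          mul_div_mul_left _ _ (pow_ne_zero 2 hq0)] at h
      rw [n2, d2, hdiv2]
  calc gaugePhi q t n (shifted q I z)
      = ∏ j : Fin n, ∏ k ∈ univ.erase j,
          ((qPoch q (q * z j / z k) / qPoch q (q ^ 2 * (t ^ 2)⁻¹ * z j / z k))
            * corr q t z I j k) := by
        rw [gaugePhi]
        exact prod_congr rfl fun j _ => prod_congr rfl fun k hk =>
          step1 j k (Finset.ne_of_mem_erase hk).symm
    _ = gaugePhi q t n z * ∏ j : Fin n, ∏ k ∈ univ.erase j, corr q t z I j k := by
        rw [gaugePhi, ← Finset.prod_mul_distrib]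
        exact prod_congr rfl fun j _ => Finset.prod_mul_distrib
    _ = gaugePhi q t n z * ∏ j : Fin n, ∏ k : Fin n, corr q t z I j k := by
        congr 1
        exact prod_congr rfl fun j _ => Finset.prod_erase univ (corr_diag q t z I j)
    _ = gaugePhi q t n z
        * ∏ i ∈ I, ∏ j ∈ univ \ I, (corr q t z I i j * corr q t z I j i) := by
        congr 1
        have e1 : ∀ g : Fin n → ℂ, ∏ j : Fin n, g j = (∏ j ∈ univ \ I, g j) * ∏ j ∈ I, g j :=
          fun g => (Finset.prod_sdiff (Finset.subset_univ I)).symm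
        calc ∏ j : Fin n, ∏ k : Fin n, corr q t z I j k
            = (∏ j ∈ univ \ I, ∏ k : Fin n, corr q t z I j k)
              * ∏ j ∈ I, ∏ k : Fin n, corr q t z I j k :=
              e1 (fun j => ∏ k : Fin n, corr q t z I j k)
          _ = (∏ j ∈ univ \ I, ∏ k ∈ I, corr q t z I j k)
              * ∏ j ∈ I, ∏ k ∈ univ \ I, corr q t z I j k := by
              congr 1
              · refine prod_congr rfl fun j hj => ?_
                have hj' : j ∉ I := (Finset.mem_sdiff.mp hj).2
                rw [e1 (fun k => corr q t z I j k)]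
                have : (∏ k ∈ univ \ I, corr q t z I j k) = 1 :=
                  Finset.prod_eq_one fun k hk => by
                    simp [corr, hj', (Finset.mem_sdiff.mp hk).2]
                rw [this, one_mul]
              · refine prod_congr rfl fun j hj => ?_
                rw [e1 (fun k => corr q t z I j k)]
                have : (∏ k ∈ I, corr q t z I j k) = 1 :=
                  Finset.prod_eq_one fun k hk => by simp [corr, hj, hk]
                rw [this, mul_one]
          _ = (∏ k ∈ I, ∏ j ∈ univ \ I, corr q t z I j k)
              * ∏ j ∈ I, ∏ k ∈ univ \ I, corr q t z I j k := by
              rw [Finset.prod_comm]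
          _ = ∏ i ∈ I, ∏ j ∈ univ \ I, (corr q t z I i j * corr q t z I j i) := by
              rw [← Finset.prod_mul_distrib]
              refine prod_congr rfl fun i hi => ?_
              rw [← Finset.prod_mul_distrib]
              exact prod_congr rfl fun j hj => mul_comm _ _

theorem statement5 (q t : ℂ) (hq : ‖q‖ < 1) (hq0 : q ≠ 0) (ht : t ≠ 0)
    (n r : ℕ) (hn : 1 ≤ n) (hr1 : 1 ≤ r) (hrn : r ≤ n)
    (f : (Fin n → ℂ) → ℂ) (z : Fin n → ℂ)
    (hz : ∀ i, z i ≠ 0)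
    (hzz : ∀ i j, i ≠ j → z i ≠ z j)
    (htz : ∀ i j, i ≠ j → t * z i - t⁻¹ * z j ≠ 0)
    (hpoch : ∀ (I : Finset (Fin n)) (j k : Fin n), j ≠ k →
      qPoch q (q * shifted q I z j / shifted q I z k) ≠ 0 ∧
      qPoch q (q ^ 2 * (t ^ 2)⁻¹ * shifted q I z j / shifted q I z k) ≠ 0) :
    macdonaldOp q t n r (fun w => gaugePhi q t n w * f w) z =
      gaugePhi q t n z * macdonaldOp q (q * t⁻¹) n r f z := by
  have h1 : ∀ j k : Fin n, j ≠ k → (1 : ℂ) - q * z j / z k ≠ 0 := by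
    intro j k hjk
    have hp := (hpoch ∅ j k hjk).1
    simp only [shifted, Finset.notMem_empty, if_false] at hp
    exact qPoch_factor_ne_zero hq hp
  have h2 : ∀ j k : Fin n, j ≠ k →
      (1 : ℂ) - q ^ 2 * (t ^ 2)⁻¹ * z j / (q ^ 2 * z k) ≠ 0 := by
    intro j k hjk
    have hp := (hpoch {k} j k hjk).2
    simp only [shifted, Finset.mem_singleton, hjk, if_false, if_true] at hp
    exact qPoch_factor_ne_zero hq hp
  rw [macdonaldOp, macdonaldOp, Finset.mul_sum]
  refine Finset.sum_congr rfl fun I hI => ?_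
  show _ * (gaugePhi q t n (shifted q I z) * f (shifted q I z)) = _
  rw [gauge_ratio q t hq hq0 ht n z hz I hpoch]
  have key : (∏ i ∈ I, ∏ j ∈ univ \ I, (t * z i - t⁻¹ * z j) / (z i - z j))
      * ∏ i ∈ I, ∏ j ∈ univ \ I, (corr q t z I i j * corr q t z I j i)
      = ∏ i ∈ I, ∏ j ∈ univ \ I,
          (q * t⁻¹ * z i - (q * t⁻¹)⁻¹ * z j) / (z i - z j) := by
    rw [← Finset.prod_mul_distrib]
    refine prod_congr rfl fun i hi => ?_
    rw [← Finset.prod_mul_distrib]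
    refine prod_congr rfl fun j hj => ?_
    have hjI : j ∉ I := (Finset.mem_sdiff.mp hj).2
    have hij : i ≠ j := fun h => hjI (h ▸ hi)
    simp only [corr, hi, hjI, if_true, if_false]
    have hzi := hz i
    have hzj := hz j
    have hzij : z i - z j ≠ 0 := sub_ne_zero.mpr (hzz i j hij)
    have ha := h1 i j hij
    have hb := h2 j i hij.symm
    have ha' : z j - q * z i ≠ 0 := by
      intro h
      apply ha
      rw [show (1 : ℂ) - q * z i / z j = (z j - q * z i) / z j by field_simp, h, zero_div]
    have hb' : t ^ 2 * z i - z j ≠ 0 := by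
      intro h
      apply hb
      rw [show (1 : ℂ) - q ^ 2 * (t ^ 2)⁻¹ * z j / (q ^ 2 * z i)
          = (t ^ 2 * z i - z j) / (t ^ 2 * z i) by field_simp, h, zero_div]
    exact pointwise_identity q t (z i) (z j) hq0 ht hzi hzj hzij ha' hb'
  rw [← key]
  ring
end
end

section
/- Let $g \in \mathbb{C}$, $n \geq 2$, $1 \leq r \leq n$, and define the difference operators $D_r^{(g)} f(\boldsymbol{\lambda}) = \sum_{|I|=r} \prod_{i \in I, j \notin I} \frac{\lambda_i - \lambda_j + 2g}{\lambda_i - \lambda_j} f(\boldsymbol{\lambda} + 2 \mathbf{1}_I)$ and $\mathcal{H}_r^{(g)} f(\boldsymbol{\lambda}) = (-1)^{r(n-1)} \sum_{|I|=r} \prod_{i \in I, j \notin I} \frac{\lambda_i - \lambda_j + 2 - 2g}{\lambda_i - \lambda_j} f(\boldsymbol{\lambda} + 2\mathbf{1}_I)$, where $\boldsymbol{\lambda} + 2\mathbf{1}_I$ adds $2$ to $\lambda_i$ for each $i \in I$. Let $\varphi(\boldsymbol{\lambda}) = \prod_{p \neq q} \Gamma\big(\tfrac{\lambda_p - \lambda_q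 + 2 - 2g}{2}\big)$. Then for any function $f$ and any $\boldsymbol{\lambda}$ where all the quantities involved are defined and nonzero, $D_r^{(g)}\big(\varphi \cdot f\big)(\boldsymbol{\lambda}) = \varphi(\boldsymbol{\lambda}) \cdot \big(\mathcal{H}_r^{(g)} f\big)(\boldsymbol{\lambda})$. -/
open Finset

noncomputable section

/-- The point `λ + 2·1_I`, adding `2` to `λ_i` for each `i ∈ I`. -/
def shiftBy2 {n : ℕ} (I : Finset (Fin n)) (lam : Fin n → ℂ) : Fin n → ℂ :=
  fun k => lam k + if k ∈ I then 2 else 0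

/-- The dual Sutherland Hamiltonian `D_r^{(g)}`. -/
def Dop (g : ℂ) (n r : ℕ) (f : (Fin n → ℂ) → ℂ) (lam : Fin n → ℂ) : ℂ :=
  ∑ I ∈ (univ : Finset (Fin n)).powersetCard r,
    (∏ i ∈ I, ∏ j ∈ univ \ I, (lam i - lam j + 2 * g) / (lam i - lam j)) *
      f (shiftBy2 I lam)

/-- The operator `𝓗_r^{(g)} = (-1)^{r(n-1)} D_r^{(1-g)}`. -/
def Hop (g : ℂ) (n r : ℕ) (f : (Fin n → ℂ) → ℂ) (lam : Fin n → ℂ) : ℂ :=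
  (-1) ^ (r * (n - 1)) *
    ∑ I ∈ (univ : Finset (Fin n)).powersetCard r,
      (∏ i ∈ I, ∏ j ∈ univ \ I, (lam i - lam j + 2 - 2 * g) / (lam i - lam j)) *
        f (shiftBy2 I lam)

/-- `φ(λ) = ∏_{p ≠ q} Γ((λ_p - λ_q + 2 - 2g)/2)`. -/
def gaugeVarphi (g : ℂ) (n : ℕ) (lam : Fin n → ℂ) : ℂ :=
  ∏ p : Fin n, ∏ q ∈ univ.erase p,
    Complex.Gamma ((lam p - lam q + 2 - 2 * g) / 2)

/-- Auxiliary: a double product over disjoint sets, written with `if`s. -/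
lemma aux_prod_ite {n : ℕ} (s t : Finset (Fin n)) (hst : Disjoint s t)
    (b : Fin n → Fin n → ℂ) :
    (∏ p : Fin n, ∏ q ∈ univ.erase p, (if p ∈ s ∧ q ∈ t then b p q else 1)) =
    ∏ p ∈ s, ∏ q ∈ t, b p q := by
  have h1 : ∀ p : Fin n, (∏ q ∈ univ.erase p, (if p ∈ s ∧ q ∈ t then b p q else 1)) =
      if p ∈ s then ∏ q ∈ t, b p q else 1 := by
    intro p
    by_cases hp : p ∈ s
    · simp only [hp, true_and, if_true]
      rw [← Finset.prod_filter]
      apply Finset.prod_congr _ (fun _ _ => rfl)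
      ext q
      simp only [mem_filter, mem_erase, mem_univ, and_true, true_and]
      constructor
      · tauto
      · intro hq
        have hqp : q ≠ p := by
          rintro rfl
          exact Finset.disjoint_left.mp hst hp hq
        tauto
    · simp [hp]
  rw [Finset.prod_congr rfl (fun p _ => h1 p)]
  rw [Finset.prod_ite_mem, Finset.univ_inter]

/-- Pointwise Gamma-shift identity. -/
lemma aux_pointwise (g : ℂ) {n : ℕ} (lam : Fin n → ℂ) (I : Finset (Fin n))
    (hG : ∀ (J : Finset (Fin n)) (p q : Fin n), p ≠ q →
      Complex.Gamma ((shiftBy2 J lam p - shiftBy2 J lam q + 2 - 2 * g) / 2) ≠ 0)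
    (p q : Fin n) (hpq : p ≠ q) :
    Complex.Gamma ((shiftBy2 I lam p - shiftBy2 I lam q + 2 - 2 * g) / 2) *
      (if p ∉ I ∧ q ∈ I then (lam p - lam q - 2 * g) / 2 else 1) =
    Complex.Gamma ((lam p - lam q + 2 - 2 * g) / 2) *
      (if p ∈ I ∧ q ∉ I then (lam p - lam q + 2 - 2 * g) / 2 else 1) := by
  have hx : (lam p - lam q + 2 - 2 * g) / 2 ≠ 0 := by
    intro h
    have h0 := hG ∅ p q hpq
    simp only [shiftBy2, Finset.notMem_empty, if_false, add_zero] at h0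
    rw [h, Complex.Gamma_zero] at h0
    exact h0 rfl
  by_cases hp : p ∈ I <;> by_cases hq : q ∈ I
  · rw [if_neg (by tauto), if_neg (by tauto), mul_one, mul_one]
    congr 1
    simp only [shiftBy2, hp, hq, if_true]
    ring
  · rw [if_neg (by tauto), if_pos ⟨hp, hq⟩, mul_one]
    have harg : (shiftBy2 I lam p - shiftBy2 I lam q + 2 - 2 * g) / 2
        = (lam p - lam q + 2 - 2 * g) / 2 + 1 := by
      simp only [shiftBy2, hp, hq, if_true, if_false]
      ring
    rw [harg, Complex.Gamma_add_one _ hx, mul_comm]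
  · have harg : (shiftBy2 I lam p - shiftBy2 I lam q + 2 - 2 * g) / 2
        = (lam p - lam q - 2 * g) / 2 := by
      simp only [shiftBy2, hp, hq, if_true, if_false]
      ring
    have hy : (lam p - lam q - 2 * g) / 2 ≠ 0 := by
      intro h
      have h0 := hG I p q hpq
      rw [harg, h, Complex.Gamma_zero] at h0
      exact h0 rfl
    rw [if_pos ⟨hp, hq⟩, if_neg (by tauto), mul_one]
    have harg2 : (lam p - lam q + 2 - 2 * g) / 2 = (lam p - lam q - 2 * g) / 2 + 1 := by
      ring
    rw [harg, harg2, Complex.Gamma_add_one _ hy, mul_comm]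
  · rw [if_neg (by tauto), if_neg (by tauto), mul_one, mul_one]
    congr 1
    simp only [shiftBy2, hp, hq, if_false]
    ring

/-- Key gauge identity: `φ(λ+2·1_I) · B = φ(λ) · A`. -/
lemma aux_phi_shift (g : ℂ) {n : ℕ} (lam : Fin n → ℂ) (I : Finset (Fin n))
    (hG : ∀ (J : Finset (Fin n)) (p q : Fin n), p ≠ q →
      Complex.Gamma ((shiftBy2 J lam p - shiftBy2 J lam q + 2 - 2 * g) / 2) ≠ 0) :
    gaugeVarphi g n (shiftBy2 I lam) *
      (∏ p ∈ univ \ I, ∏ q ∈ I, (lam p - lam q - 2 * g) / 2) =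
    gaugeVarphi g n lam *
      (∏ p ∈ I, ∏ q ∈ univ \ I, (lam p - lam q + 2 - 2 * g) / 2) := by
  have hd1 : Disjoint ((univ : Finset (Fin n)) \ I) I := Finset.sdiff_disjoint
  have hd2 : Disjoint I ((univ : Finset (Fin n)) \ I) := Finset.disjoint_sdiff
  rw [← aux_prod_ite (univ \ I) I hd1 (fun p q => (lam p - lam q - 2 * g) / 2),
      ← aux_prod_ite I (univ \ I) hd2 (fun p q => (lam p - lam q + 2 - 2 * g) / 2)]
  unfold gaugeVarphi
  rw [← Finset.prod_mul_distrib, ← Finset.prod_mul_distrib]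
  refine Finset.prod_congr rfl fun p _ => ?_
  rw [← Finset.prod_mul_distrib, ← Finset.prod_mul_distrib]
  refine Finset.prod_congr rfl fun q hq => ?_
  have hpq : p ≠ q := fun h => (Finset.mem_erase.mp hq).1 h.symm
  have h := aux_pointwise g lam I hG p q hpq
  simpa only [Finset.mem_sdiff, Finset.mem_univ, true_and] using h

theorem statement10 (g : ℂ) (n r : ℕ) (hn : 2 ≤ n) (hr1 : 1 ≤ r) (hrn : r ≤ n)
    (f : (Fin n → ℂ) → ℂ) (lam : Fin n → ℂ)
    (hlam : ∀ i j, i ≠ j → lam i ≠ lam j)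
    (hG : ∀ (I : Finset (Fin n)) (p q : Fin n), p ≠ q →
      Complex.Gamma ((shiftBy2 I lam p - shiftBy2 I lam q + 2 - 2 * g) / 2) ≠ 0)
    (hden : ∀ i j, i ≠ j → lam i - lam j + 2 * g ≠ 0) :
    Dop g n r (fun w => gaugeVarphi g n w * f w) lam =
      gaugeVarphi g n lam * Hop g n r f lam := by
  unfold Dop Hop
  rw [Finset.mul_sum, Finset.mul_sum]
  refine Finset.sum_congr rfl fun I hI => ?_
  have hIcard : I.card = r := (Finset.mem_powersetCard.mp hI).2
  set B : ℂ := ∏ p ∈ univ \ I, ∏ q ∈ I, (lam p - lam q - 2 * g) / 2 with hB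
  set A : ℂ := ∏ p ∈ I, ∏ q ∈ univ \ I, (lam p - lam q + 2 - 2 * g) / 2 with hA
  have hne : ∀ p ∈ univ \ I, ∀ q ∈ I, p ≠ q := by
    intro p hp q hq h
    exact (Finset.mem_sdiff.mp hp).2 (h ▸ hq)
  have hBne : B ≠ 0 := by
    rw [hB]
    apply Finset.prod_ne_zero_iff.mpr
    intro p hp
    apply Finset.prod_ne_zero_iff.mpr
    intro q hq
    intro h
    have h2 : lam p - lam q - 2 * g = 0 := by
      rcases div_eq_zero_iff.mp h with h2 | h2
      · exact h2
      · exact absurd h2 two_ne_zero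
    exact hden q p (hne p hp q hq).symm (by linear_combination -h2)
  have hphi := aux_phi_shift g lam I hG
  have hshift : gaugeVarphi g n (shiftBy2 I lam) = gaugeVarphi g n lam * A / B := by
    field_simp
    linear_combination hphi
  have hcards : (univ \ I).card = n - r := by
    rw [Finset.card_sdiff_of_subset (Finset.subset_univ I), Finset.card_univ, Fintype.card_fin,
      hIcard]
  have key : (∏ i ∈ I, ∏ j ∈ univ \ I, (lam i - lam j + 2 * g) / (lam i - lam j)) * A
      = (-1) ^ (r * (n - r)) *
        ((∏ i ∈ I, ∏ j ∈ univ \ I, (lam i - lam j + 2 - 2 * g) / (lam i - lam j)) * B) := by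
    rw [hA, hB, Finset.prod_comm (s := univ \ I) (t := I),
      ← Finset.prod_mul_distrib,
      show ((-1 : ℂ)) ^ (r * (n - r)) = ∏ _i ∈ I, ((-1 : ℂ)) ^ (n - r) from by
        rw [Finset.prod_const, hIcard, ← pow_mul, Nat.mul_comm (n - r) r],
      ← Finset.prod_mul_distrib, ← Finset.prod_mul_distrib]
    refine Finset.prod_congr rfl fun i hi => ?_
    rw [← Finset.prod_mul_distrib,
      show ((-1 : ℂ)) ^ (n - r) = ∏ _j ∈ univ \ I, (-1 : ℂ) from by
        rw [Finset.prod_const, hcards],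
      ← Finset.prod_mul_distrib, ← Finset.prod_mul_distrib]
    refine Finset.prod_congr rfl fun j hj => ?_
    have hij : i ≠ j := fun h => (Finset.mem_sdiff.mp hj).2 (h ▸ hi)
    have hd : lam i - lam j ≠ 0 := sub_ne_zero.mpr (hlam i j hij)
    have hc : lam i - lam j + 2 * g ≠ 0 := hden i j hij
    field_simp
    ring
  have hsign : ((-1 : ℂ)) ^ (r * (n - r)) = (-1) ^ (r * (n - 1)) := by
    have hpar : Even (r * (n - r)) ↔ Even (r * (n - 1)) := by
      rw [Nat.even_mul, Nat.even_mul, Nat.even_sub hrn,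
        Nat.even_sub (le_trans hr1 hrn)]
      simp only [Nat.not_even_one, iff_false]
      tauto
    rcases Nat.even_or_odd (r * (n - r)) with he | ho
    · rw [he.neg_one_pow, (hpar.mp he).neg_one_pow]
    · have ho2 : Odd (r * (n - 1)) := by
        rw [← Nat.not_even_iff_odd] at ho ⊢
        exact fun h => ho (hpar.mpr h)
      rw [ho.neg_one_pow, ho2.neg_one_pow]
  beta_reduce
  rw [hshift]
  have expand : (∏ i ∈ I, ∏ j ∈ univ \ I, (lam i - lam j + 2 * g) / (lam i - lam j)) *
      (gaugeVarphi g n lam * A / B * f (shiftBy2 I lam))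
      = ((∏ i ∈ I, ∏ j ∈ univ \ I, (lam i - lam j + 2 * g) / (lam i - lam j)) * A) *
        (gaugeVarphi g n lam * f (shiftBy2 I lam)) / B := by
    ring
  rw [expand, key, hsign, div_eq_iff hBne]
  ring
end
end
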